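/- The separation profile of the infinite Sierpiński graph S satisfies sep^{1/2}_S(n) ≍ n^{log 2 / log 6}: there exist constants c, C > 0 such that c·n^{log 2 / log 6} ≤ sep^{1/2}_S(n) ≤ C·n^{log 2 / log 6} for all sufficiently large n. -/

import Mathlib

open scoped Classical

/-- Reachability within the subgraph of `X` induced on a vertex set `s`. -/
def SimpleGraph.ReachIn {V : Type*} (X : SimpleGraph V) (s : Set V) (v w : V) : Prop :=
  ∃ (hv : v ∈ s) (hw : w ∈ s), (X.induce s).Reachable ⟨v, hv⟩ ⟨w, hw⟩

/-- The vertex set of the connected component of `v` in the subgraph of `X` induced on `s`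
(empty if `v ∉ s`). -/
def SimpleGraph.compIn {V : Type*} (X : SimpleGraph V) (s : Set V) (v : V) : Set V :=
  {w | X.ReachIn s v w}

/-- `T` is a vertex set witnessing `cut¹ᐟ²` for the subgraph of `X` induced on the finite
vertex set `G`: after removing `T` from `G`, every connected component has at most
`|G|/2` vertices. -/
def IsHalfCutSet {V : Type*} (X : SimpleGraph V) (G T : Finset V) : Prop :=
  T ⊆ G ∧ ∀ v : V, 2 * (X.compIn (↑(G \ T)) v).ncard ≤ G.card

/-- `cut¹ᐟ²` of the subgraph of `X` induced on the finite vertex set `G`: the least size of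
a vertex set whose removal leaves all connected components of size at most `|G|/2`. -/
noncomputable def cutHalf {V : Type*} (X : SimpleGraph V) (G : Finset V) : ℕ :=
  sInf {t | ∃ T : Finset V, IsHalfCutSet X G T ∧ T.card = t}

/-- The `1/2`-separation profile of `X`, over finite subgraphs with vertex set inside `W`. -/
noncomputable def sepHalf {V : Type*} (X : SimpleGraph V) (W : Set V) (n : ℕ) : ℕ :=
  sSup {c | ∃ G : Finset V, ↑G ⊆ W ∧ G.card ≤ n ∧ c = cutHalf X G}

/-- The `i`-th digit of `x` in base `b`. -/
def digit (b i x : ℕ) : ℕ := x / b ^ i % b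

/-- Membership in the vertex set of the infinite Sierpinski graph: no position at which
both coordinates have base-3 digit `1`. -/
def SierpMem (p : ℕ × ℕ) : Prop :=
  ∀ i : ℕ, ¬(digit 3 i p.1 = 1 ∧ digit 3 i p.2 = 1)

/-- The infinite Sierpinski graph `S`, with edges between valid points at `ℓ¹`-distance 1. -/
def SierpGraph : SimpleGraph (ℕ × ℕ) where
  Adj p q := SierpMem p ∧ SierpMem q ∧ |(p.1 : ℤ) - q.1| + |(p.2 : ℤ) - q.2| = 1
  symm := by
    constructor
    rintro p q ⟨hp, hq, h⟩
    exact ⟨hq, hp, by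
      rw [abs_sub_comm (q.1 : ℤ) (p.1 : ℤ), abs_sub_comm (q.2 : ℤ) (p.2 : ℤ)]; exact h⟩
  loopless := by constructor; rintro p ⟨-, -, h⟩; simp at h

/-- The vertex set of the sphere `Γ_k`. -/
noncomputable def GammaV (k : ℕ) : Finset (ℕ × ℕ) :=
  (Finset.range (3 ^ k) ×ˢ Finset.range (3 ^ k)).filter SierpMem

/-- The intersection of the vertical line `V_x` with `Γ_k`. -/
def VlineSet (k x : ℕ) : Set (ℕ × ℕ) := {p | p ∈ GammaV k ∧ p.1 = x}

/-- The intersection of the horizontal line `H_y` with `Γ_k`. -/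
def HlineSet (k y : ℕ) : Set (ℕ × ℕ) := {p | p ∈ GammaV k ∧ p.2 = y}

/-- The vertical line `V_x` is complete in `Γ_k`: its intersection with `Γ_k` is connected. -/
def CompleteV (k x : ℕ) : Prop := (SierpGraph.induce (VlineSet k x)).Connected

/-- The horizontal line `H_y` is complete in `Γ_k`: its intersection with `Γ_k` is connected. -/
def CompleteH (k y : ℕ) : Prop := (SierpGraph.induce (HlineSet k y)).Connected

/-- The vertex set of the complete-lines subgraph `C_k` of `Γ_k`. -/
noncomputable def CkV (k : ℕ) : Finset (ℕ × ℕ) :=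
  (GammaV k).filter fun p => CompleteV k p.1 ∨ CompleteH k p.2

set_option maxHeartbeats 1000000
set_option linter.unusedVariables false

namespace SepAux

open Relation Finset

variable {V : Type*} (X : SimpleGraph V)

/-- The step relation within a vertex set. -/
def Rel (s : Set V) (a b : V) : Prop := a ∈ s ∧ b ∈ s ∧ X.Adj a b

variable {X}

lemma rel_symm {s : Set V} : Symmetric (Rel X s) := by
  rintro a b ⟨ha, hb, h⟩; exact ⟨hb, ha, h.symm⟩

lemma reachIn_iff {s : Set V} {v w : V} :
    X.ReachIn s v w ↔ v ∈ s ∧ w ∈ s ∧ ReflTransGen (Rel X s) v w := by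
  constructor
  · rintro ⟨hv, hw, hr⟩
    refine ⟨hv, hw, ?_⟩
    obtain ⟨p⟩ := hr
    generalize hA : (⟨v, hv⟩ : s) = a at p
    generalize hB : (⟨w, hw⟩ : s) = b at p
    have : ReflTransGen (Rel X s) a.1 b.1 := by
      clear hA hB
      induction p with
      | nil => exact .refl
      | cons h p ih =>
        rename_i x y z
        exact .head ⟨x.2, y.2, h⟩ ih
    rwa [← hA, ← hB] at this
  · rintro ⟨hv, hw, hr⟩
    refine ⟨hv, hw, ?_⟩
    induction hr with
    | refl => rfl
    | tail h₁ h₂ ih =>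
      rename_i b c
      have hb : b ∈ s := h₂.1
      have hc : c ∈ s := h₂.2.1
      have adj : (X.induce s).Adj ⟨b, hb⟩ ⟨c, hc⟩ := h₂.2.2
      exact (ih hb).trans adj.reachable

lemma mem_compIn {s : Set V} {v w : V} :
    w ∈ X.compIn s v ↔ v ∈ s ∧ w ∈ s ∧ ReflTransGen (Rel X s) v w := by
  simp [SimpleGraph.compIn, reachIn_iff, Set.mem_setOf_eq]

lemma compIn_subset {s : Set V} {v : V} : X.compIn s v ⊆ s :=
  fun _ hw => (mem_compIn.1 hw).2.1

lemma compIn_eq_empty {s : Set V} {v : V} (h : v ∉ s) : X.compIn s v = ∅ := by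
  ext w; simp only [mem_compIn, Set.mem_empty_iff_false, iff_false]
  rintro ⟨hv, -, -⟩; exact h hv

lemma mem_compIn_self {s : Set V} {v : V} (h : v ∈ s) : v ∈ X.compIn s v :=
  mem_compIn.2 ⟨h, h, .refl⟩

lemma compIn_mono {s s' : Set V} (h : s ⊆ s') (v : V) :
    X.compIn s v ⊆ X.compIn s' v := by
  intro w hw
  obtain ⟨hv, hw', hr⟩ := mem_compIn.1 hw
  exact mem_compIn.2 ⟨h hv, h hw', ReflTransGen.mono (r := Rel X s) (p := Rel X s')
    (by intro a b hab; obtain ⟨x, y, z⟩ := hab; exact ⟨h x, h y, z⟩) v w hr⟩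

/-- Any function invariant under adjacency within `s` is constant on components. -/
lemma compIn_invariant {s : Set V} {f : V → ℕ}
    (hf : ∀ a b, a ∈ s → b ∈ s → X.Adj a b → f a = f b) {v w : V}
    (hw : w ∈ X.compIn s v) : f w = f v := by
  obtain ⟨hv, hw', hr⟩ := mem_compIn.1 hw
  clear hw hw'
  induction hr with
  | refl => rfl
  | tail h₁ h₂ ih => exact (hf _ _ h₂.1 h₂.2.1 h₂.2.2).symm.trans ih

/-- Localization: if a component is contained in `s'`, it is inside the component in `s'`. -/
lemma compIn_localize {s s' : Set V} {v : V}
    (h : X.compIn s v ⊆ s') : X.compIn s v ⊆ X.compIn s' v := by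
  intro w hw
  obtain ⟨hv, hw', hr⟩ := mem_compIn.1 hw
  have hv' : v ∈ s' := h (mem_compIn_self hv)
  refine mem_compIn.2 ⟨hv', h hw, ?_⟩
  clear hw hw'
  induction hr with
  | refl => exact .refl
  | tail h₁ h₂ ih =>
    rename_i b c
    have hb : b ∈ X.compIn s v := mem_compIn.2 ⟨hv, h₂.1, h₁⟩
    have hc : c ∈ X.compIn s v := mem_compIn.2 ⟨hv, h₂.2.1, h₁.tail h₂⟩
    exact ih.tail ⟨h hb, h hc, h₂.2.2⟩

lemma compIn_eq_of_mem {s : Set V} {v w : V} (h : w ∈ X.compIn s v) :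
    X.compIn s w = X.compIn s v := by
  obtain ⟨hv, hw, hr⟩ := mem_compIn.1 h
  have hwv : ReflTransGen (Rel X s) w v := (by haveI : Std.Symm (Rel X s) := ⟨fun a b h => rel_symm h⟩; exact Std.Symm.symm _ _ hr)
  ext u
  simp only [mem_compIn]
  constructor
  · rintro ⟨-, hu, h2⟩; exact ⟨hv, hu, hr.trans h2⟩
  · rintro ⟨-, hu, h2⟩; exact ⟨hw, hu, hwv.trans h2⟩

lemma compIn_disjoint_or_eq {s : Set V} (v w : V) :
    X.compIn s v = X.compIn s w ∨ Disjoint (X.compIn s v) (X.compIn s w) := by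
  by_cases h : Disjoint (X.compIn s v) (X.compIn s w)
  · exact Or.inr h
  · left
    obtain ⟨u, hu⟩ := Set.not_disjoint_iff.1 h
    rw [← compIn_eq_of_mem hu.1, compIn_eq_of_mem hu.2]

end SepAux
namespace SepAux
open Finset

lemma digit_zero (b x : ℕ) : digit b 0 x = x % b := by simp [digit]

lemma digit_succ (b i x : ℕ) : digit b (i+1) x = digit b i (x / b) := by
  simp only [digit, Nat.div_div_eq_div_mul, ← pow_succ']

lemma digit_lt (i x : ℕ) : digit 3 i x < 3 := Nat.mod_lt _ (by norm_num)

lemma digit_eq_zero_of_lt {i x : ℕ} (h : x < 3 ^ i) : digit 3 i x = 0 := by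
  simp [digit, Nat.div_eq_of_lt h]

lemma digit_mod {i k x : ℕ} (h : i < k) : digit 3 i (x % 3 ^ k) = digit 3 i x := by
  have h3 : (3:ℕ) ^ k = 3 ^ i * 3 ^ (k - i) := by rw [← pow_add]; congr 1; omega
  rw [digit, digit, h3, Nat.mod_mul_right_div_self]
  exact Nat.mod_mod_of_dvd _ (dvd_pow_self 3 (by omega))

/-- Base-3 numbers with no digit equal to 1, below `3^k`. -/
noncomputable def A (k : ℕ) : Finset ℕ :=
  (range (3 ^ k)).filter (fun x => ∀ i, digit 3 i x ≠ 1)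

lemma mem_A {k x : ℕ} : x ∈ A k ↔ x < 3 ^ k ∧ ∀ i, digit 3 i x ≠ 1 := by
  simp [A]

lemma mem_A_iff {k x : ℕ} (hx : x < 3 ^ k) :
    x ∈ A k ↔ ∀ i < k, digit 3 i x ≠ 1 := by
  rw [mem_A]
  constructor
  · exact fun h i _ => h.2 i
  · intro h
    refine ⟨hx, fun i => ?_⟩
    by_cases hi : i < k
    · exact h i hi
    · rw [digit_eq_zero_of_lt (lt_of_lt_of_le hx (pow_le_pow_right₀ (by norm_num) (by omega)))]
      omega

lemma card_A (k : ℕ) : (A k).card = 2 ^ k := by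
  induction k with
  | zero =>
    have hA0 : A 0 = {0} := by
      ext x
      simp only [mem_A, pow_zero, Nat.lt_one_iff, mem_singleton]
      constructor
      · exact fun h => h.1
      · rintro rfl
        exact ⟨rfl, fun i => by rw [digit_eq_zero_of_lt (by positivity)]; omega⟩
    rw [hA0]; rfl
  | succ k ih =>
    have : (A (k+1)).card = (({0, 2} : Finset ℕ) ×ˢ A k).card := by
      apply Finset.card_bij (fun x _ => (x % 3, x / 3))
      · intro x hx
        rw [mem_A] at hx
        obtain ⟨hlt, hd⟩ := hx
        have h0 : x % 3 ≠ 1 := by have := hd 0; rwa [digit_zero] at this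
        have : x % 3 < 3 := Nat.mod_lt _ (by norm_num)
        simp only [mem_product, mem_insert, mem_singleton, mem_A]
        refine ⟨by omega, ?_, fun i => ?_⟩
        · have : x < 3 * 3 ^ k := by rw [← pow_succ']; exact hlt
          omega
        · have := hd (i+1); rwa [digit_succ] at this
      swap
      · intro p hp
        simp only [mem_product, mem_insert, mem_singleton, mem_A] at hp
        obtain ⟨h1, h2, h3⟩ := hp
        refine ⟨p.1 + 3 * p.2, ?_, ?_⟩
        · rw [mem_A]
          constructor
          · have hlt : p.1 + 3 * p.2 < 3 * 3 ^ k := by omega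
            rw [pow_succ']; exact hlt
          · intro i
            cases i with
            | zero => rw [digit_zero]; omega
            | succ i =>
              rw [digit_succ]
              have he : (p.1 + 3 * p.2) / 3 = p.2 := by omega
              rw [he]; exact h3 i
        · obtain ⟨pa, pb⟩ := p
          simp only [Prod.mk.injEq]
          constructor <;> omega
      · intro x hx y hy hxy
        simp only [Prod.mk.injEq] at hxy
        omega
    rw [this, Finset.card_product, ih]
    rw [show ({0,2} : Finset ℕ).card = 2 from rfl]
    ring

/-- The repunit `(3^t - 1)/2 = 11…1` in base 3. -/
def rep (t : ℕ) : ℕ := 3 ^ t / 2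

lemma three_pow_odd (t : ℕ) : 3 ^ t % 2 = 1 := by
  rw [Nat.pow_mod]; simp

lemma rep_spec (t : ℕ) : 3 ^ t = 2 * rep t + 1 := by
  have := three_pow_odd t
  have := Nat.div_add_mod (3 ^ t) 2
  unfold rep; omega

lemma rep_succ (t : ℕ) : rep (t+1) = 3 * rep t + 1 := by
  have h1 := rep_spec t
  have h2 := rep_spec (t+1)
  have : (3:ℕ) ^ (t+1) = 3 * 3 ^ t := by rw [pow_succ']
  omega

lemma rep_lt (t : ℕ) : rep t < 3 ^ t := by have := rep_spec t; omega

/-- characterization of repunit residues: all low digits equal to 1 -/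
lemma spec_iff (t x : ℕ) : (∀ i < t, digit 3 i x = 1) ↔ x % 3 ^ t = rep t := by
  induction t generalizing x with
  | zero => simp [rep, Nat.mod_one]
  | succ t ih =>
    have hsplit : x % 3 ^ (t+1) = x % 3 + 3 * (x / 3 % 3 ^ t) := by
      have e1 := Nat.div_add_mod x 3
      have e2 := Nat.div_add_mod (x/3) (3 ^ t)
      have hb : x % 3 + 3 * (x / 3 % 3 ^ t) < 3 ^ (t+1) := by
        have : x / 3 % 3 ^ t < 3 ^ t := Nat.mod_lt _ (by positivity)
        have : x % 3 < 3 := Nat.mod_lt _ (by norm_num)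
        rw [pow_succ']; omega
      have hx : x = x % 3 + 3 * (x / 3 % 3 ^ t) + 3 ^ (t+1) * (x / 3 / 3 ^ t) := by
        rw [pow_succ']; nlinarith [e1, e2]
      conv_lhs => rw [hx]
      rw [Nat.add_mul_mod_self_left, Nat.mod_eq_of_lt hb]
    constructor
    · intro h
      have h0 : x % 3 = 1 := by have := h 0 (by omega); rwa [digit_zero] at this
      have ht : x / 3 % 3 ^ t = rep t := by
        rw [← ih]; intro i hi
        have := h (i+1) (by omega); rwa [digit_succ] at this
      rw [hsplit, h0, ht, rep_succ]; ring
    · intro h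
      rw [hsplit, rep_succ] at h
      have hm : x % 3 < 3 := Nat.mod_lt _ (by norm_num)
      have hr : x / 3 % 3 ^ t < 3 ^ t := Nat.mod_lt _ (by positivity)
      have hrt : rep t < 3 ^ t := rep_lt t
      have h0 : x % 3 = 1 := by omega
      have ht : x / 3 % 3 ^ t = rep t := by omega
      intro i hi
      cases i with
      | zero => rwa [digit_zero]
      | succ i => rw [digit_succ]; exact (ih (x/3)).2 ht i (by omega)

/-- count of points of an interval in a residue family -/
lemma count_residue_le (a L M : ℕ) (hM : 0 < M) (B : Finset ℕ) :
    ((Finset.Ico a (a + L)).filter (fun x => x % M ∈ B)).card ≤ B.card * (L / M + 2) := by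
  classical
  have : ((Finset.Ico a (a + L)).filter (fun x => x % M ∈ B)).card ≤
      (B ×ˢ Finset.Icc (a / M) ((a + L) / M)).card := by
    apply Finset.card_le_card_of_injOn (fun x => (x % M, x / M))
    · intro x hx
      simp only [Finset.mem_coe, mem_filter, mem_Ico] at hx
      simp only [Finset.mem_coe, mem_product, mem_Icc]
      refine ⟨hx.2, Nat.div_le_div_right (by omega), Nat.div_le_div_right (by omega)⟩
    · intro x hx y hy hxy
      have h1 : x % M = y % M := congrArg Prod.fst hxy
      have h2 : x / M = y / M := congrArg Prod.snd hxy
      have e1 := Nat.div_add_mod x M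
      have e2 := Nat.div_add_mod y M
      have h3 : M * (x / M) = M * (y / M) := by rw [h2]
      omega
  refine this.trans ?_
  rw [Finset.card_product, Nat.card_Icc]
  have hd : (a + L) / M < a / M + L / M + 2 := by
    rw [Nat.div_lt_iff_lt_mul hM]
    have e1 := Nat.div_add_mod a M
    have e2 := Nat.div_add_mod L M
    have m1 : a % M < M := Nat.mod_lt _ hM
    have m2 : L % M < M := Nat.mod_lt _ hM
    nlinarith [e1, e2, m1, m2]
  have hb : (a + L) / M + 1 - a / M ≤ L / M + 2 := by
    refine Nat.sub_le_iff_le_add.2 ?_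
    calc (a + L) / M + 1 ≤ (a / M + L / M + 1) + 1 := by
          exact Nat.add_le_add_right (by exact Nat.lt_succ_iff.1 hd) 1
      _ = L / M + 2 + a / M := by ring
  exact Nat.mul_le_mul le_rfl hb

end SepAux
namespace SepAux
open Relation Finset

lemma sierpMem_left {x : ℕ} (h : ∀ i, digit 3 i x ≠ 1) (y : ℕ) : SierpMem (x, y) := by
  intro i hi
  exact h i hi.1

lemma sierpMem_right {y : ℕ} (h : ∀ i, digit 3 i y ≠ 1) (x : ℕ) : SierpMem (x, y) := by
  intro i hi
  exact h i hi.2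

lemma adj_up {x y : ℕ} (h1 : SierpMem (x, y)) (h2 : SierpMem (x, y+1)) :
    SierpGraph.Adj (x, y) (x, y+1) := by
  refine ⟨h1, h2, ?_⟩
  have e1 : ((x:ℤ) - x) = 0 := by ring
  have e2 : ((y:ℤ) - (↑(y+1) : ℤ)) = -1 := by push_cast; ring
  simp only [e1, e2, abs_zero, abs_neg, abs_one]
  norm_num

lemma adj_rt {x y : ℕ} (h1 : SierpMem (x, y)) (h2 : SierpMem (x+1, y)) :
    SierpGraph.Adj (x, y) (x+1, y) := by
  refine ⟨h1, h2, ?_⟩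
  have e1 : ((x:ℤ) - (↑(x+1) : ℤ)) = -1 := by push_cast; ring
  have e2 : ((y:ℤ) - y) = 0 := by ring
  simp only [e1, e2, abs_zero, abs_neg, abs_one]
  norm_num

lemma adj_cases {p q : ℕ × ℕ} (h : SierpGraph.Adj p q) :
    (p.1 = q.1 ∧ (p.2 + 1 = q.2 ∨ q.2 + 1 = p.2)) ∨
      (p.2 = q.2 ∧ (p.1 + 1 = q.1 ∨ q.1 + 1 = p.1)) := by
  obtain ⟨-, -, habs⟩ := h
  have key : ∀ a b : ℤ, |a| + |b| = 1 →
      (a = 0 ∧ (b = 1 ∨ b = -1)) ∨ (b = 0 ∧ (a = 1 ∨ a = -1)) := by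
    intro a b hab
    rcases abs_cases a with ⟨e1, s1⟩ | ⟨e1, s1⟩ <;> rcases abs_cases b with ⟨e2, s2⟩ | ⟨e2, s2⟩ <;>
      rw [e1, e2] at hab <;> omega
  have := key _ _ habs
  omega

lemma reach_vert {s : Set (ℕ × ℕ)} (hs : ∀ p ∈ s, SierpMem p) (x : ℕ) :
    ∀ y₁ y₂ : ℕ, y₁ ≤ y₂ → (∀ j, y₁ ≤ j → j ≤ y₂ → (x, j) ∈ s) →
      ReflTransGen (Rel SierpGraph s) (x, y₁) (x, y₂) := by
  intro y₁ y₂ h12 hseg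
  induction y₂, h12 using Nat.le_induction with
  | base => exact .refl
  | succ n hn ih =>
    have h1 : (x, n) ∈ s := hseg n hn (by omega)
    have h2 : (x, n+1) ∈ s := hseg (n+1) (by omega) le_rfl
    exact (ih (fun j hj1 hj2 => hseg j hj1 (by omega))).tail
      ⟨h1, h2, adj_up (hs _ h1) (hs _ h2)⟩

lemma reach_horiz {s : Set (ℕ × ℕ)} (hs : ∀ p ∈ s, SierpMem p) (y : ℕ) :
    ∀ x₁ x₂ : ℕ, x₁ ≤ x₂ → (∀ j, x₁ ≤ j → j ≤ x₂ → (j, y) ∈ s) →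
      ReflTransGen (Rel SierpGraph s) (x₁, y) (x₂, y) := by
  intro x₁ x₂ h12 hseg
  induction x₂, h12 using Nat.le_induction with
  | base => exact .refl
  | succ n hn ih =>
    have h1 : (n, y) ∈ s := hseg n hn (by omega)
    have h2 : (n+1, y) ∈ s := hseg (n+1) (by omega) le_rfl
    exact (ih (fun j hj1 hj2 => hseg j hj1 (by omega))).tail
      ⟨h1, h2, adj_rt (hs _ h1) (hs _ h2)⟩

/-- two-sided versions -/
lemma reach_vert' {s : Set (ℕ × ℕ)} (hs : ∀ p ∈ s, SierpMem p) (x y₁ y₂ : ℕ)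
    (hseg : ∀ j, min y₁ y₂ ≤ j → j ≤ max y₁ y₂ → (x, j) ∈ s) :
    ReflTransGen (Rel SierpGraph s) (x, y₁) (x, y₂) := by
  rcases le_total y₁ y₂ with h | h
  · exact reach_vert hs x y₁ y₂ h (fun j h1 h2 => hseg j (by omega) (by omega))
  · haveI : Std.Symm (Rel SierpGraph s) := ⟨fun a b h => rel_symm h⟩
    exact Std.Symm.symm _ _
      (reach_vert hs x y₂ y₁ h (fun j h1 h2 => hseg j (by omega) (by omega)))

lemma reach_horiz' {s : Set (ℕ × ℕ)} (hs : ∀ p ∈ s, SierpMem p) (y x₁ x₂ : ℕ)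
    (hseg : ∀ j, min x₁ x₂ ≤ j → j ≤ max x₁ x₂ → (j, y) ∈ s) :
    ReflTransGen (Rel SierpGraph s) (x₁, y) (x₂, y) := by
  rcases le_total x₁ x₂ with h | h
  · exact reach_horiz hs y x₁ x₂ h (fun j h1 h2 => hseg j (by omega) (by omega))
  · haveI : Std.Symm (Rel SierpGraph s) := ⟨fun a b h => rel_symm h⟩
    exact Std.Symm.symm _ _
      (reach_horiz hs y x₂ x₁ h (fun j h1 h2 => hseg j (by omega) (by omega)))

end SepAux
namespace SepAux
open Relation Finset

/-- The lower-bound witness graph: union of full good columns and full good rows. -/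
noncomputable def Gk (k : ℕ) : Finset (ℕ × ℕ) :=
  (A k ×ˢ range (3 ^ k)) ∪ (range (3 ^ k) ×ˢ A k)

lemma A_subset_range (k : ℕ) : A k ⊆ range (3 ^ k) := fun x hx => mem_range.2 (mem_A.1 hx).1

lemma Gk_subset_sierp (k : ℕ) : ↑(Gk k) ⊆ {p : ℕ × ℕ | SierpMem p} := by
  intro p hp
  simp only [Gk, coe_union, Set.mem_union, mem_coe, mem_product] at hp
  rcases hp with ⟨h1, -⟩ | ⟨-, h2⟩
  · exact fun i hi => (mem_A.1 h1).2 i hi.1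
  · exact fun i hi => (mem_A.1 h2).2 i hi.2

lemma card_Gk (k : ℕ) : (Gk k).card + 2 ^ k * 2 ^ k = 2 * (2 ^ k * 3 ^ k) := by
  have hinter : (A k ×ˢ range (3 ^ k)) ∩ (range (3 ^ k) ×ˢ A k) = A k ×ˢ A k := by
    ext p
    simp only [mem_inter, mem_product, mem_range]
    constructor
    · rintro ⟨⟨h1, h2⟩, h3, h4⟩; exact ⟨h1, h4⟩
    · rintro ⟨h1, h2⟩
      exact ⟨⟨h1, (mem_A.1 h2).1⟩, (mem_A.1 h1).1, h2⟩
  have := Finset.card_union_add_card_inter (A k ×ˢ range (3 ^ k)) (range (3 ^ k) ×ˢ A k)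
  rw [hinter] at this
  simp only [Finset.card_product, Finset.card_range, card_A] at this ⊢
  rw [Gk]
  ring_nf at this ⊢
  omega

lemma isHalfCutSet_self {V : Type*} (X : SimpleGraph V) (G : Finset V) :
    IsHalfCutSet X G G := by
  refine ⟨subset_rfl, fun v => ?_⟩
  rw [sdiff_self]
  have h : X.compIn (↑(⊥ : Finset V)) v = ∅ := by
    have := compIn_subset (X := X) (s := (↑(⊥ : Finset V) : Set V)) (v := v)
    simpa using Set.subset_empty_iff.1 (by simpa using this)
  rw [h]
  simp

lemma cutHalf_nonempty {V : Type*} (X : SimpleGraph V) (G : Finset V) :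
    {t | ∃ T : Finset V, IsHalfCutSet X G T ∧ T.card = t}.Nonempty :=
  ⟨G.card, G, isHalfCutSet_self X G, rfl⟩

lemma cutHalf_le_card {V : Type*} (X : SimpleGraph V) (G : Finset V) :
    cutHalf X G ≤ G.card :=
  Nat.sInf_le ⟨G, isHalfCutSet_self X G, rfl⟩

/-- The main lower bound for the half-cut of `Gk`. -/
lemma lower_cut {k : ℕ} (hk : 1 ≤ k) {T : Finset (ℕ × ℕ)}
    (hT : IsHalfCutSet SierpGraph (Gk k) T) : 2 ^ k ≤ 4 * T.card := by
  by_contra hcon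
  push_neg at hcon
  obtain ⟨hTsub, hcut⟩ := hT
  simp only [Finset.coe_sdiff] at hcut
  set U : Finset ℕ := (A k).filter (fun x => ∀ p ∈ T, p.1 ≠ x) with hUdef
  set W : Finset ℕ := (A k).filter (fun y => ∀ p ∈ T, p.2 ≠ y) with hWdef
  have hU : (A k).card ≤ U.card + T.card := by
    have hsub : A k ⊆ U ∪ T.image Prod.fst := by
      intro x hx
      by_cases h : ∀ p ∈ T, p.1 ≠ x
      · exact mem_union_left _ (mem_filter.2 ⟨hx, h⟩)
      · push_neg at h
        obtain ⟨p, hp, hpe⟩ := h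
        exact mem_union_right _ (mem_image.2 ⟨p, hp, hpe⟩)
    calc (A k).card ≤ (U ∪ T.image Prod.fst).card := Finset.card_le_card hsub
      _ ≤ U.card + (T.image Prod.fst).card := Finset.card_union_le _ _
      _ ≤ U.card + T.card := by
          exact Nat.add_le_add_left (Finset.card_image_le) _
  have hW : (A k).card ≤ W.card + T.card := by
    have hsub : A k ⊆ W ∪ T.image Prod.snd := by
      intro x hx
      by_cases h : ∀ p ∈ T, p.2 ≠ x
      · exact mem_union_left _ (mem_filter.2 ⟨hx, h⟩)
      · push_neg at h
        obtain ⟨p, hp, hpe⟩ := h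
        exact mem_union_right _ (mem_image.2 ⟨p, hp, hpe⟩)
    calc (A k).card ≤ (W ∪ T.image Prod.snd).card := Finset.card_le_card hsub
      _ ≤ W.card + (T.image Prod.snd).card := Finset.card_union_le _ _
      _ ≤ W.card + T.card := Nat.add_le_add_left (Finset.card_image_le) _
  rw [card_A] at hU hW
  have hUne : U.Nonempty := by
    rw [← Finset.card_pos]; omega
  have hWne : W.Nonempty := by
    rw [← Finset.card_pos]; omega
  obtain ⟨xs, hxs⟩ := hUne
  obtain ⟨ys, hys⟩ := hWne
  set s : Set (ℕ × ℕ) := ↑(Gk k) \ ↑T with hsdef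
  have hsmem : ∀ p ∈ s, SierpMem p := by
    intro p hp
    exact Gk_subset_sierp k hp.1
  have hAU : U ⊆ A k := Finset.filter_subset _ _
  have hAW : W ⊆ A k := Finset.filter_subset _ _
  have col_in : ∀ x ∈ U, ∀ j < 3 ^ k, (x, j) ∈ s := by
    intro x hx j hj
    have hG : (x, j) ∈ Gk k := mem_union_left _ (mem_product.2 ⟨hAU hx, mem_range.2 hj⟩)
    have hnT : (x, j) ∉ T := fun hmem => (mem_filter.1 hx).2 _ hmem rfl
    exact ⟨hG, hnT⟩
  have row_in : ∀ y ∈ W, ∀ j < 3 ^ k, (j, y) ∈ s := by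
    intro y hy j hj
    have hG : (j, y) ∈ Gk k := mem_union_right _ (mem_product.2 ⟨mem_range.2 hj, hAW hy⟩)
    have hnT : (j, y) ∉ T := fun hmem => (mem_filter.1 hy).2 _ hmem rfl
    exact ⟨hG, hnT⟩
  have hxlt : ∀ x ∈ A k, x < 3 ^ k := fun x hx => (mem_A.1 hx).1
  have hv : (xs, ys) ∈ s := col_in xs hxs ys (hxlt ys (hAW hys))
  set F : Finset (ℕ × ℕ) := (U ×ˢ range (3 ^ k)) ∪ (range (3 ^ k) ×ˢ W) with hFdef
  have hF : ↑F ⊆ SierpGraph.compIn s (xs, ys) := by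
    intro p hp
    simp only [hFdef, coe_union, Set.mem_union, mem_coe, mem_product, mem_range] at hp
    rcases hp with ⟨h1, h2⟩ | ⟨h1, h2⟩
    · -- p.1 ∈ U : go along row ys then up column p.1
      have r1 : ReflTransGen (Rel SierpGraph s) (xs, ys) (p.1, ys) :=
        reach_horiz' hsmem ys xs p.1 (fun j hj1 hj2 =>
          row_in ys hys j (by
            have := hxlt xs (hAU hxs)
            have := hxlt p.1 (hAU h1)
            omega))
      have r2 : ReflTransGen (Rel SierpGraph s) (p.1, ys) (p.1, p.2) :=
        reach_vert' hsmem p.1 ys p.2 (fun j hj1 hj2 =>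
          col_in p.1 h1 j (by
            have := hxlt ys (hAW hys)
            omega))
      refine mem_compIn.2 ⟨hv, ?_, r1.trans r2⟩
      have : (p.1, p.2) ∈ s := col_in p.1 h1 p.2 h2
      simpa using this
    · -- p.2 ∈ W : go up column xs then along row p.2
      have r1 : ReflTransGen (Rel SierpGraph s) (xs, ys) (xs, p.2) :=
        reach_vert' hsmem xs ys p.2 (fun j hj1 hj2 =>
          col_in xs hxs j (by
            have := hxlt ys (hAW hys)
            have := hxlt p.2 (hAW h2)
            omega))
      have r2 : ReflTransGen (Rel SierpGraph s) (xs, p.2) (p.1, p.2) :=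
        reach_horiz' hsmem p.2 xs p.1 (fun j hj1 hj2 =>
          row_in p.2 h2 j (by
            have := hxlt xs (hAU hxs)
            omega))
      refine mem_compIn.2 ⟨hv, ?_, r1.trans r2⟩
      have : (p.1, p.2) ∈ s := row_in p.2 h2 p.1 h1
      simpa using this
  -- cardinality of F
  have hFcard : F.card + U.card * W.card = U.card * 3 ^ k + 3 ^ k * W.card := by
    have hinter : (U ×ˢ range (3 ^ k)) ∩ (range (3 ^ k) ×ˢ W) = U ×ˢ W := by
      ext p
      simp only [mem_inter, mem_product, mem_range]
      constructor
      · rintro ⟨⟨a1, a2⟩, a3, a4⟩; exact ⟨a1, a4⟩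
      · rintro ⟨a1, a2⟩
        exact ⟨⟨a1, hxlt p.2 (hAW a2)⟩, hxlt p.1 (hAU a1), a2⟩
    have := Finset.card_union_add_card_inter (U ×ˢ range (3 ^ k)) (range (3 ^ k) ×ˢ W)
    rw [hinter] at this
    simp only [Finset.card_product, Finset.card_range] at this
    rw [hFdef]
    omega
  have hfin : (SierpGraph.compIn s (xs, ys)).Finite :=
    Set.Finite.subset (Gk k).finite_toSet
      (compIn_subset.trans (by rw [hsdef]; exact Set.diff_subset))
  have hncard : F.card ≤ (SierpGraph.compIn s (xs, ys)).ncard := by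
    rw [← Set.ncard_coe_finset F]
    exact Set.ncard_le_ncard hF hfin
  have hhalf := hcut (xs, ys)
  -- assemble the numeric contradiction
  have hUcard : U.card ≤ 2 ^ k := by rw [← card_A k]; exact Finset.card_le_card hAU
  have hWcard : W.card ≤ 2 ^ k := by rw [← card_A k]; exact Finset.card_le_card hAW
  have hGcard := card_Gk k
  have hmP : 2 ^ k < 3 ^ k := Nat.pow_lt_pow_left (by norm_num) (by omega)
  -- cast to integers
  have hu : ((2:ℤ))^k ≤ (U.card : ℤ) + (T.card : ℤ) := by exact_mod_cast hU
  have hw : ((2:ℤ))^k ≤ (W.card : ℤ) + (T.card : ℤ) := by exact_mod_cast hW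
  have hum : (U.card : ℤ) ≤ 2^k := by exact_mod_cast hUcard
  have hwm : (W.card : ℤ) ≤ 2^k := by exact_mod_cast hWcard
  have ht4 : 4 * (T.card : ℤ) + 1 ≤ 2^k := by exact_mod_cast hcon
  have hmp : ((2:ℤ))^k + 1 ≤ 3^k := by exact_mod_cast hmP
  have ht0 : (0:ℤ) ≤ (T.card : ℤ) := Int.natCast_nonneg _
  have hu0 : (0:ℤ) ≤ (U.card : ℤ) := Int.natCast_nonneg _
  have hw0 : (0:ℤ) ≤ (W.card : ℤ) := Int.natCast_nonneg _
  set u : ℤ := (U.card : ℤ) with hudef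
  set w : ℤ := (W.card : ℤ) with hwdef
  set t : ℤ := (T.card : ℤ) with htdef
  set m : ℤ := ((2:ℤ))^k with hmdef
  set P : ℤ := ((3:ℤ))^k with hPdef
  have hmain : 2 * (u * P + P * w - u * w) ≤ 2 * m * P - m * m := by
    have e1 : (F.card : ℤ) + u * w = u * P + P * w := by
      rw [hudef, hwdef, hPdef]; exact_mod_cast hFcard
    have e2 : ((Gk k).card : ℤ) + m * m = 2 * (m * P) := by
      rw [hmdef, hPdef]; exact_mod_cast hGcard
    have e3 : (F.card : ℤ) ≤ ((SierpGraph.compIn s (xs, ys)).ncard : ℤ) := by exact_mod_cast hncard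
    have e4 : 2 * ((SierpGraph.compIn s (xs, ys)).ncard : ℤ) ≤ ((Gk k).card : ℤ) := by
      exact_mod_cast hhalf
    nlinarith [e1, e2, e3, e4]
  have k1 : (0:ℤ) ≤ (u - (m - t)) * (P - m) := by
    apply mul_nonneg <;> linarith
  have k2 : (0:ℤ) ≤ (m - w) * u := by
    apply mul_nonneg <;> linarith
  have k3 : (0:ℤ) ≤ (w - (m - t)) * P := by
    apply mul_nonneg <;> linarith
  have k4 : (0:ℤ) ≤ (m - 1 - 4 * t) * P := by
    apply mul_nonneg <;> linarith
  have k5 : (0:ℤ) ≤ (m + 1) * (P - (m + 1)) := by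
    apply mul_nonneg <;> linarith
  nlinarith [hmain, k1, k2, k3, k4, k5]

/-- The lower bound for `cutHalf` of `Gk`. -/
lemma lower_cutHalf {k : ℕ} (hk : 1 ≤ k) : 2 ^ k ≤ 4 * cutHalf SierpGraph (Gk k) := by
  obtain ⟨T, hT, hTc⟩ := Nat.sInf_mem (cutHalf_nonempty SierpGraph (Gk k))
  rw [cutHalf, ← hTc]
  exact lower_cut hk hT

end SepAux
namespace SepAux
open Relation Finset

/-- all components bounded -/
def Cuts {V : Type*} (X : SimpleGraph V) (s : Set V) (N : ℕ) : Prop :=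
  ∀ v : V, 2 * (X.compIn s v).ncard ≤ N

lemma compIn_finite {V : Type*} {X : SimpleGraph V} {s : Set V} {P : Finset V}
    (hs : s ⊆ ↑P) (v : V) : (X.compIn s v).Finite :=
  Set.Finite.subset P.finite_toSet (compIn_subset.trans hs)

/-- two heavy components coincide -/
lemma heavy_eq {V : Type*} {X : SimpleGraph V} {s : Set V} {P : Finset V} {N : ℕ}
    (hs : s ⊆ ↑P) (hPN : P.card ≤ N) {v₀ v : V}
    (h₀ : N < 2 * (X.compIn s v₀).ncard) (h : N < 2 * (X.compIn s v).ncard) :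
    X.compIn s v = X.compIn s v₀ := by
  rcases compIn_disjoint_or_eq (X := X) (s := s) v v₀ with heq | hdisj
  · exact heq
  · exfalso
    have hsub : X.compIn s v ∪ X.compIn s v₀ ⊆ ↑P :=
      Set.union_subset (compIn_subset.trans hs) (compIn_subset.trans hs)
    have hfin1 := compIn_finite (X := X) hs v
    have hfin2 := compIn_finite (X := X) hs v₀
    have hcard : (X.compIn s v ∪ X.compIn s v₀).ncard =
        (X.compIn s v).ncard + (X.compIn s v₀).ncard :=
      Set.ncard_union_eq hdisj hfin1 hfin2
    have hle : (X.compIn s v ∪ X.compIn s v₀).ncard ≤ P.card := by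
      rw [← Set.ncard_coe_finset P]
      exact Set.ncard_le_ncard hsub P.finite_toSet
    omega

/-- composing a pre-cut with a recursive cut of the unique heavy component -/
lemma compose_cut {V : Type*} {X : SimpleGraph V} {P T₀ T' Q : Finset V} {N : ℕ}
    (hPN : P.card ≤ N)
    (hQ : ∀ v : V, N < 2 * (X.compIn (↑P \ ↑T₀) v).ncard →
      X.compIn (↑P \ ↑T₀) v = ↑Q)
    (hT' : Cuts X (↑Q \ ↑T') N) :
    Cuts X (↑P \ (↑T₀ ∪ ↑T')) N := by
  intro v
  set s₁ : Set V := ↑P \ ↑T₀ with hs₁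
  set s₂ : Set V := ↑P \ (↑T₀ ∪ ↑T') with hs₂
  have hsub : s₂ ⊆ s₁ := by
    rw [hs₁, hs₂]
    exact Set.diff_subset_diff_right Set.subset_union_left
  have hmono : X.compIn s₂ v ⊆ X.compIn s₁ v := compIn_mono hsub v
  have hs₁P : s₁ ⊆ ↑P := Set.diff_subset
  by_cases h : 2 * (X.compIn s₁ v).ncard ≤ N
  · have := Set.ncard_le_ncard hmono (compIn_finite (X := X) hs₁P v)
    omega
  · push_neg at h
    have heqQ : X.compIn s₁ v = ↑Q := hQ v h
    have hc2sub : X.compIn s₂ v ⊆ ↑Q \ ↑T' := by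
      intro w hw
      refine ⟨heqQ ▸ hmono hw, ?_⟩
      have : w ∈ s₂ := compIn_subset hw
      rw [hs₂] at this
      exact fun hT => this.2 (Set.mem_union_right _ hT)
    have hloc : X.compIn s₂ v ⊆ X.compIn (↑Q \ ↑T') v := compIn_localize hc2sub
    have hfin : (X.compIn (↑Q \ ↑T') v).Finite :=
      compIn_finite (X := X) (Set.diff_subset) v
    have := Set.ncard_le_ncard hloc hfin
    have := hT' v
    omega

/-- counting invariants: no removed position lies between two points of a component -/
lemma count_lt_succ {A : Finset ℕ} {x : ℕ} (hx : x ∉ A) :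
    (A.filter (· < x + 1)).card = (A.filter (· < x)).card := by
  congr 1
  ext a
  simp only [mem_filter, and_congr_right_iff]
  intro ha
  constructor
  · intro h
    rcases Nat.lt_or_ge a x with h' | h'
    · exact h'
    · exfalso; have : a = x := by omega
      exact hx (this ▸ ha)
  · omega

lemma no_elem_between {A : Finset ℕ} {x y : ℕ}
    (h : (A.filter (· < x)).card = (A.filter (· < y)).card) (hxy : x ≤ y) :
    ∀ a ∈ A, ¬(x ≤ a ∧ a < y) := by
  rintro a ha ⟨h1, h2⟩
  have hsub0 : A.filter (· < x) ⊆ A.filter (· < y) := by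
    intro b hb
    simp only [mem_filter] at hb ⊢
    exact ⟨hb.1, by omega⟩
  have hsub : A.filter (· < x) ⊂ A.filter (· < y) := by
    refine (Finset.ssubset_iff_of_subset hsub0).2 ?_
    refine ⟨a, mem_filter.2 ⟨ha, by simpa using h2⟩, ?_⟩
    simp only [mem_filter, not_and]
    intro _
    omega
  exact absurd h (Nat.ne_of_lt (Finset.card_lt_card hsub))

/-- confinement of components between removed columns/rows -/
lemma comp_confine {s : Set (ℕ × ℕ)} (AC AR : Finset ℕ)
    (hs : ∀ p ∈ s, p.1 ∉ AC ∧ p.2 ∉ AR) (v w : ℕ × ℕ)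
    (hw : w ∈ SierpGraph.compIn s v) :
    (∀ a ∈ AC, ¬(min v.1 w.1 ≤ a ∧ a < max v.1 w.1)) ∧
      (∀ a ∈ AR, ¬(min v.2 w.2 ≤ a ∧ a < max v.2 w.2)) := by
  have hinvx : ∀ a b, a ∈ s → b ∈ s → SierpGraph.Adj a b →
      (AC.filter (· < a.1)).card = (AC.filter (· < b.1)).card := by
    intro a b ha hb hadj
    rcases adj_cases hadj with ⟨h1, -⟩ | ⟨-, h2⟩
    · rw [h1]
    · rcases h2 with h2 | h2
      · rw [← h2, count_lt_succ (hs a ha).1]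
      · rw [← h2, count_lt_succ (hs b hb).1]
  have hinvy : ∀ a b, a ∈ s → b ∈ s → SierpGraph.Adj a b →
      (AR.filter (· < a.2)).card = (AR.filter (· < b.2)).card := by
    intro a b ha hb hadj
    rcases adj_cases hadj with ⟨-, h2⟩ | ⟨h1, -⟩
    · rcases h2 with h2 | h2
      · rw [← h2, count_lt_succ (hs a ha).2]
      · rw [← h2, count_lt_succ (hs b hb).2]
    · rw [h1]
  have hx := compIn_invariant (f := fun p => (AC.filter (· < p.1)).card) hinvx hw
  have hy := compIn_invariant (f := fun p => (AR.filter (· < p.2)).card) hinvy hw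
  constructor
  · rcases le_total v.1 w.1 with h | h
    · simp only [min_eq_left h, max_eq_right h]
      exact no_elem_between hx.symm h
    · simp only [min_eq_right h, max_eq_left h]
      exact no_elem_between hx h
  · rcases le_total v.2 w.2 with h | h
    · simp only [min_eq_left h, max_eq_right h]
      exact no_elem_between hy.symm h
    · simp only [min_eq_right h, max_eq_left h]
      exact no_elem_between hy h

/-- every half-open interval of length `M` contains a point with any given residue -/
lemma exists_residue (v M r : ℕ) (hM : 0 < M) (hr : r < M) :
    ∃ a, v ≤ a ∧ a < v + M ∧ a % M = r := by
  have e := Nat.div_add_mod v M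
  have hlt : v % M < M := Nat.mod_lt _ hM
  by_cases h : v % M ≤ r
  · refine ⟨M * (v / M) + r, by omega, by omega, ?_⟩
    rw [Nat.mul_add_mod]
    exact Nat.mod_eq_of_lt hr
  · refine ⟨M * (v / M + 1) + r, by push_neg at h; nlinarith [e], ?_, ?_⟩
    · push_neg at h; nlinarith [e]
    · rw [Nat.mul_add_mod]
      exact Nat.mod_eq_of_lt hr

end SepAux
namespace SepAux
open Relation Finset

lemma cuts_of_small {V : Type*} (X : SimpleGraph V) {P T : Finset V} {N : ℕ}
    (h : 2 * P.card ≤ N) : Cuts X (↑P \ ↑T) N := by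
  intro v
  have hsub : X.compIn (↑P \ ↑T) v ⊆ ↑P := compIn_subset.trans Set.diff_subset
  have := Set.ncard_le_ncard hsub P.finite_toSet
  rw [Set.ncard_coe_finset] at this
  omega

lemma cuts_self {V : Type*} (X : SimpleGraph V) (P : Finset V) (N : ℕ) :
    Cuts X (↑P \ ↑P) N := by
  intro v
  have h0 : (↑P \ ↑P : Set V) = ∅ := by simp
  rw [h0]
  have h1 : X.compIn (∅ : Set V) v = ∅ :=
    Set.subset_empty_iff.1 (compIn_subset (X := X) (s := (∅ : Set V)))
  rw [h1]; simp

/-- The recursive cut at dyadic-like scales inside a window of side `3^(st+1)`. -/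
lemma claimA : ∀ (st : ℕ) (P : Finset (ℕ × ℕ)), ↑P ⊆ {p : ℕ × ℕ | SierpMem p} →
    ∀ (N x₀ y₀ : ℕ), P.card ≤ N →
    (∀ p ∈ P, x₀ ≤ p.1 ∧ p.1 < x₀ + 3 ^ (st+1) ∧ y₀ ≤ p.2 ∧ p.2 < y₀ + 3 ^ (st+1)) →
    ∃ T : Finset (ℕ × ℕ), T ⊆ P ∧ T.card ≤ 128 * 2 ^ st ∧
      Cuts SierpGraph (↑P \ ↑T) N := by
  intro st
  induction st with
  | zero =>
    intro P hPS N x₀ y₀ hPN hbox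
    have hP9 : P.card ≤ 9 := by
      have hsub : P ⊆ Finset.Ico x₀ (x₀ + 3) ×ˢ Finset.Ico y₀ (y₀ + 3) := by
        intro p hp
        obtain ⟨h1, h2, h3, h4⟩ := hbox p hp
        simp only [mem_product, mem_Ico]
        norm_num at h2 h4
        omega
      calc P.card ≤ _ := Finset.card_le_card hsub
        _ = 9 := by
            rw [Finset.card_product, Nat.card_Ico, Nat.card_Ico,
              show x₀ + 3 - x₀ = 3 by omega, show y₀ + 3 - y₀ = 3 by omega]
    by_cases h : 2 * P.card ≤ N
    · exact ⟨∅, empty_subset _, by simp, cuts_of_small _ h⟩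
    · exact ⟨P, subset_rfl, by omega, cuts_self _ _ _⟩
  | succ st ih =>
    intro P hPS N x₀ y₀ hPN hbox
    set M : ℕ := 3 ^ (st + 1) with hMdef
    have hM0 : 0 < M := by positivity
    set r : ℕ := rep (st + 1) with hrdef
    have hrM : r < M := rep_lt (st + 1)
    have hbox3 : ∀ p ∈ P, x₀ ≤ p.1 ∧ p.1 < x₀ + 3 * M ∧ y₀ ≤ p.2 ∧ p.2 < y₀ + 3 * M := by
      intro p hp
      have := hbox p hp
      have h3 : (3:ℕ) ^ (st + 1 + 1) = 3 * M := by rw [hMdef, pow_succ']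
      omega
    set T₀ : Finset (ℕ × ℕ) := P.filter (fun p => p.1 % M = r ∨ p.2 % M = r) with hT₀def
    -- residue sets
    set XsA : Finset ℕ := (Finset.Ico x₀ (x₀ + 3 * M)).filter (fun z => z % M ∈ ({r} : Finset ℕ))
      with hXsA
    set XsB : Finset ℕ := (Finset.Ico x₀ (x₀ + 3 * M)).filter (fun z => z % M ∈ A (st + 1))
      with hXsB
    set YsA : Finset ℕ := (Finset.Ico y₀ (y₀ + 3 * M)).filter (fun z => z % M ∈ ({r} : Finset ℕ))
      with hYsA
    set YsB : Finset ℕ := (Finset.Ico y₀ (y₀ + 3 * M)).filter (fun z => z % M ∈ A (st + 1))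
      with hYsB
    have hdiv3 : 3 * M / M = 3 := Nat.mul_div_cancel 3 hM0
    have hXsAcard : XsA.card ≤ 5 := by
      have := count_residue_le x₀ (3 * M) M hM0 ({r} : Finset ℕ)
      rw [hdiv3] at this
      simpa [hXsA] using this
    have hYsAcard : YsA.card ≤ 5 := by
      have := count_residue_le y₀ (3 * M) M hM0 ({r} : Finset ℕ)
      rw [hdiv3] at this
      simpa [hYsA] using this
    have hXsBcard : XsB.card ≤ 2 ^ (st+1) * 5 := by
      have := count_residue_le x₀ (3 * M) M hM0 (A (st + 1))
      rw [hdiv3, card_A] at this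
      simpa [hXsB] using this
    have hYsBcard : YsB.card ≤ 2 ^ (st+1) * 5 := by
      have := count_residue_le y₀ (3 * M) M hM0 (A (st + 1))
      rw [hdiv3, card_A] at this
      simpa [hYsB] using this
    -- residue membership from Sierpinski condition
    have hresid : ∀ p ∈ P, (p.1 % M = r → p.2 % M ∈ A (st + 1)) ∧
        (p.2 % M = r → p.1 % M ∈ A (st + 1)) := by
      intro p hp
      have hS : SierpMem p := hPS (by exact_mod_cast hp)
      constructor
      · intro h1
        have hd1 : ∀ i < st + 1, digit 3 i p.1 = 1 := (spec_iff (st+1) p.1).2 h1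
        rw [mem_A]
        refine ⟨Nat.mod_lt _ hM0, fun i => ?_⟩
        by_cases hi : i < st + 1
        · rw [digit_mod hi]
          exact fun hd => hS i ⟨hd1 i hi, hd⟩
        · have hlt : p.2 % M < 3 ^ i :=
            lt_of_lt_of_le (Nat.mod_lt _ hM0)
              (by rw [hMdef]; exact Nat.pow_le_pow_right (by norm_num) (by omega))
          rw [digit_eq_zero_of_lt hlt]
          omega
      · intro h2
        have hd2 : ∀ i < st + 1, digit 3 i p.2 = 1 := (spec_iff (st+1) p.2).2 h2
        rw [mem_A]
        refine ⟨Nat.mod_lt _ hM0, fun i => ?_⟩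
        by_cases hi : i < st + 1
        · rw [digit_mod hi]
          exact fun hd => hS i ⟨hd, hd2 i hi⟩
        · have hlt : p.1 % M < 3 ^ i :=
            lt_of_lt_of_le (Nat.mod_lt _ hM0)
              (by rw [hMdef]; exact Nat.pow_le_pow_right (by norm_num) (by omega))
          rw [digit_eq_zero_of_lt hlt]
          omega
    -- cardinality of T₀
    have hT₀card : T₀.card ≤ 50 * 2 ^ (st + 1) := by
      have hT₀eq : T₀ = P.filter (fun p => p.1 % M = r) ∪ P.filter (fun p => p.2 % M = r) := by
        rw [hT₀def, Finset.filter_or]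
      have h1 : (P.filter (fun p => p.1 % M = r)).card ≤ 5 * (2 ^ (st+1) * 5) := by
        calc (P.filter (fun p => p.1 % M = r)).card ≤ (XsA ×ˢ YsB).card := by
              apply Finset.card_le_card
              intro p hp
              obtain ⟨hpP, hp1⟩ := mem_filter.1 hp
              obtain ⟨b1, b2, b3, b4⟩ := hbox3 p hpP
              simp only [mem_product, hXsA, hYsB, mem_filter, mem_Ico, mem_singleton]
              exact ⟨⟨⟨b1, b2⟩, hp1⟩, ⟨b3, b4⟩, (hresid p hpP).1 hp1⟩
          _ ≤ 5 * (2 ^ (st+1) * 5) := by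
              rw [Finset.card_product]
              exact Nat.mul_le_mul hXsAcard hYsBcard
      have h2 : (P.filter (fun p => p.2 % M = r)).card ≤ (2 ^ (st+1) * 5) * 5 := by
        calc (P.filter (fun p => p.2 % M = r)).card ≤ (XsB ×ˢ YsA).card := by
              apply Finset.card_le_card
              intro p hp
              obtain ⟨hpP, hp1⟩ := mem_filter.1 hp
              obtain ⟨b1, b2, b3, b4⟩ := hbox3 p hpP
              simp only [mem_product, hXsB, hYsA, mem_filter, mem_Ico, mem_singleton]
              exact ⟨⟨⟨b1, b2⟩, (hresid p hpP).2 hp1⟩, ⟨b3, b4⟩, hp1⟩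
          _ ≤ (2 ^ (st+1) * 5) * 5 := by
              rw [Finset.card_product]
              exact Nat.mul_le_mul hXsBcard hYsAcard
      calc T₀.card ≤ _ + _ := hT₀eq ▸ Finset.card_union_le _ _
        _ ≤ 5 * (2 ^ (st+1) * 5) + (2 ^ (st+1) * 5) * 5 := Nat.add_le_add h1 h2
        _ = 50 * 2 ^ (st+1) := by ring
    set s₁ : Set (ℕ × ℕ) := ↑P \ ↑T₀ with hs₁def
    have hs₁P : s₁ ⊆ ↑P := Set.diff_subset
    have hs₁mem : ∀ p ∈ s₁, p ∈ P ∧ ¬(p.1 % M = r ∨ p.2 % M = r) := by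
      intro p hp
      have hpP : p ∈ P := by exact_mod_cast hp.1
      refine ⟨hpP, fun hor => hp.2 ?_⟩
      have hmem : p ∈ T₀ := by rw [hT₀def]; exact mem_filter.2 ⟨hpP, hor⟩
      exact_mod_cast hmem
    -- removed-position sets for confinement
    set AC : Finset ℕ := (Finset.Ico x₀ (x₀ + 3 * M)).filter (fun z => z % M = r) with hACdef
    set AR : Finset ℕ := (Finset.Ico y₀ (y₀ + 3 * M)).filter (fun z => z % M = r) with hARdef
    have hsAC : ∀ p ∈ s₁, p.1 ∉ AC ∧ p.2 ∉ AR := by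
      intro p hp
      obtain ⟨-, hnot⟩ := hs₁mem p hp
      constructor
      · intro hmem
        exact hnot (Or.inl (mem_filter.1 hmem).2)
      · intro hmem
        exact hnot (Or.inr (mem_filter.1 hmem).2)
    by_cases hheavy : ∃ v₀, N < 2 * (SierpGraph.compIn s₁ v₀).ncard
    · obtain ⟨v₀, hv₀⟩ := hheavy
      have hv₀s : v₀ ∈ s₁ := by
        by_contra h
        rw [compIn_eq_empty h] at hv₀
        simp at hv₀
      set Q : Finset (ℕ × ℕ) := P.filter (fun p => p ∈ SierpGraph.compIn s₁ v₀) with hQdef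
      have hQcoe : (↑Q : Set (ℕ × ℕ)) = SierpGraph.compIn s₁ v₀ := by
        ext p
        simp only [hQdef, coe_filter, Set.mem_setOf_eq]
        constructor
        · rintro ⟨-, h2⟩; exact h2
        · intro h
          exact ⟨by exact_mod_cast hs₁P (compIn_subset h), h⟩
      have hQP : Q ⊆ P := filter_subset _ _
      have hQne : Q.Nonempty := ⟨v₀, by
        rw [hQdef, mem_filter]
        exact ⟨by exact_mod_cast hs₁P hv₀s, mem_compIn_self hv₀s⟩⟩
      -- pairwise coordinate bounds within the heavy component
      have hpairx : ∀ w ∈ SierpGraph.compIn s₁ v₀, ∀ w' ∈ SierpGraph.compIn s₁ v₀,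
          w.1 ≤ w'.1 → w'.1 < w.1 + M := by
        intro w hw w' hw' hle
        by_contra hcon
        push_neg at hcon
        obtain ⟨a, ha1, ha2, ha3⟩ := exists_residue w.1 M r hM0 hrM
        have hwP : w ∈ P := (hs₁mem w (compIn_subset hw)).1
        have hw'P : w' ∈ P := (hs₁mem w' (compIn_subset hw')).1
        have hwb := hbox3 w hwP
        have hw'b := hbox3 w' hw'P
        have haAC : a ∈ AC := by
          rw [hACdef, mem_filter, mem_Ico]
          exact ⟨⟨by omega, by omega⟩, ha3⟩
        have hw'w : w' ∈ SierpGraph.compIn s₁ w := by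
          rw [compIn_eq_of_mem hw]; exact hw'
        have := (comp_confine AC AR hsAC w w' hw'w).1 a haAC
        rw [min_eq_left hle, max_eq_right hle] at this
        exact this ⟨by omega, by omega⟩
      have hpairy : ∀ w ∈ SierpGraph.compIn s₁ v₀, ∀ w' ∈ SierpGraph.compIn s₁ v₀,
          w.2 ≤ w'.2 → w'.2 < w.2 + M := by
        intro w hw w' hw' hle
        by_contra hcon
        push_neg at hcon
        obtain ⟨a, ha1, ha2, ha3⟩ := exists_residue w.2 M r hM0 hrM
        have hwP : w ∈ P := (hs₁mem w (compIn_subset hw)).1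
        have hw'P : w' ∈ P := (hs₁mem w' (compIn_subset hw')).1
        have hwb := hbox3 w hwP
        have hw'b := hbox3 w' hw'P
        have haAR : a ∈ AR := by
          rw [hARdef, mem_filter, mem_Ico]
          exact ⟨⟨by omega, by omega⟩, ha3⟩
        have hw'w : w' ∈ SierpGraph.compIn s₁ w := by
          rw [compIn_eq_of_mem hw]; exact hw'
        have := (comp_confine AC AR hsAC w w' hw'w).2 a haAR
        rw [min_eq_left hle, max_eq_right hle] at this
        exact this ⟨by omega, by omega⟩
      -- bounding box of the heavy component at the next scale
      have hQimne : (Q.image Prod.fst).Nonempty := hQne.image _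
      have hQimne2 : (Q.image Prod.snd).Nonempty := hQne.image _
      set x₀' : ℕ := (Q.image Prod.fst).min' hQimne with hx₀'
      set y₀' : ℕ := (Q.image Prod.snd).min' hQimne2 with hy₀'
      obtain ⟨wx, hwxQ, hwx⟩ := mem_image.1 ((Q.image Prod.fst).min'_mem hQimne)
      obtain ⟨wy, hwyQ, hwy⟩ := mem_image.1 ((Q.image Prod.snd).min'_mem hQimne2)
      have hwxC : wx ∈ SierpGraph.compIn s₁ v₀ := by rw [← hQcoe]; exact_mod_cast hwxQ
      have hwyC : wy ∈ SierpGraph.compIn s₁ v₀ := by rw [← hQcoe]; exact_mod_cast hwyQ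
      have hQbox : ∀ p ∈ Q, x₀' ≤ p.1 ∧ p.1 < x₀' + 3 ^ (st + 1) ∧
          y₀' ≤ p.2 ∧ p.2 < y₀' + 3 ^ (st + 1) := by
        intro p hp
        have hpC : p ∈ SierpGraph.compIn s₁ v₀ := by rw [← hQcoe]; exact_mod_cast hp
        have h1 : x₀' ≤ p.1 := by
          rw [hx₀']
          exact Finset.min'_le _ _ (mem_image_of_mem _ hp)
        have h2 : y₀' ≤ p.2 := by
          rw [hy₀']
          exact Finset.min'_le _ _ (mem_image_of_mem _ hp)
        have h3 : p.1 < wx.1 + M :=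
          hpairx wx hwxC p hpC (by rw [hwx, ← hx₀']; exact h1)
        have h4 : p.2 < wy.2 + M :=
          hpairy wy hwyC p hpC (by rw [hwy, ← hy₀']; exact h2)
        have h3' : p.1 < x₀' + M := by rw [hx₀', ← hwx]; exact h3
        have h4' : p.2 < y₀' + M := by rw [hy₀', ← hwy]; exact h4
        rw [← hMdef]
        exact ⟨h1, h3', h2, h4'⟩
      obtain ⟨T', hT'Q, hT'card, hT'cuts⟩ :=
        ih Q (fun p hp => hPS (by exact_mod_cast hQP (by exact_mod_cast hp))) N x₀' y₀'
          (le_trans (Finset.card_le_card hQP) hPN) hQbox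
      refine ⟨T₀ ∪ T', Finset.union_subset (filter_subset _ _) (hT'Q.trans hQP), ?_, ?_⟩
      · calc (T₀ ∪ T').card ≤ T₀.card + T'.card := Finset.card_union_le _ _
          _ ≤ 50 * 2 ^ (st+1) + 128 * 2 ^ st := Nat.add_le_add hT₀card hT'card
          _ ≤ 128 * 2 ^ (st+1) := by ring_nf; omega
      · have hQfun : ∀ v, N < 2 * (SierpGraph.compIn (↑P \ ↑T₀) v).ncard →
            SierpGraph.compIn (↑P \ ↑T₀) v = ↑Q := by
          intro v hv
          rw [hQcoe]
          exact heavy_eq hs₁P hPN hv₀ hv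
        have := compose_cut hPN hQfun hT'cuts
        rw [Finset.coe_union]
        exact this
    · push_neg at hheavy
      exact ⟨T₀, filter_subset _ _, by
        calc T₀.card ≤ 50 * 2 ^ (st+1) := hT₀card
          _ ≤ 128 * 2 ^ (st+1) := by omega, hheavy⟩

end SepAux
namespace SepAux
open Relation Finset

lemma choose_cheap_col (G : Finset (ℕ × ℕ)) (m : ℕ) (hm0 : 0 < m)
    (f : ℕ × ℕ → ℕ) (c : ℕ) :
    ∃ a, c * m ≤ a ∧ a < (c+1) * m ∧
      m * (G.filter (fun p => f p = a)).card ≤ (G.filter (fun p => f p / m = c)).card := by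
  set strip := G.filter (fun p => f p / m = c) with hstrip
  have hfib : strip.card =
      ∑ a ∈ Finset.Ico (c*m) ((c+1)*m), (strip.filter (fun p => f p = a)).card := by
    apply Finset.card_eq_sum_card_fiberwise
    intro p hp
    obtain ⟨hpG, hpc⟩ := mem_filter.1 hp
    have e := Nat.div_add_mod (f p) m
    have hmod : f p % m < m := Nat.mod_lt _ hm0
    rw [hpc] at e
    rw [Finset.mem_coe, mem_Ico]
    have h1 : (c+1)*m = m*c + m := by ring
    have h2 : c*m = m*c := by ring
    omega
  have hfib2 : ∀ a ∈ Finset.Ico (c*m) ((c+1)*m),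
      strip.filter (fun p => f p = a) = G.filter (fun p => f p = a) := by
    intro a ha
    rw [mem_Ico] at ha
    ext p
    constructor
    · intro hp
      exact mem_filter.2 ⟨(mem_filter.1 (mem_filter.1 hp).1).1, (mem_filter.1 hp).2⟩
    · intro hp
      obtain ⟨h1, h3⟩ := mem_filter.1 hp
      refine mem_filter.2 ⟨mem_filter.2 ⟨h1, ?_⟩, h3⟩
      rw [h3]
      exact Nat.div_eq_of_lt_le ha.1 ha.2
  by_contra hcon
  push_neg at hcon
  have hlow : ∀ a ∈ Finset.Ico (c*m) ((c+1)*m),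
      strip.card + 1 ≤ m * (strip.filter (fun p => f p = a)).card := by
    intro a ha
    rw [hfib2 a ha]
    rw [mem_Ico] at ha
    exact hcon a ha.1 ha.2
  have hsum : ∑ _a ∈ Finset.Ico (c*m) ((c+1)*m), (strip.card + 1) ≤
      ∑ a ∈ Finset.Ico (c*m) ((c+1)*m), m * (strip.filter (fun p => f p = a)).card :=
    Finset.sum_le_sum hlow
  rw [Finset.sum_const, Nat.card_Ico, ← Finset.mul_sum, ← hfib, smul_eq_mul] at hsum
  have hIco : (c+1)*m - c*m = m := by
    have h : (c+1)*m = c*m + m := by ring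
    omega
  rw [hIco] at hsum
  have hdist : m * (strip.card + 1) = m * strip.card + m := by ring
  omega

/-- The master construction: a half-cut of any finite subgraph of the Sierpinski graph. -/
lemma master (G : Finset (ℕ × ℕ)) (hG : ↑G ⊆ {p : ℕ × ℕ | SierpMem p}) (u : ℕ) :
    ∃ T : Finset (ℕ × ℕ), T ⊆ G ∧
      3 ^ u * T.card ≤ 2 * G.card + 3 ^ u * (128 * 2 ^ u) ∧
      Cuts SierpGraph (↑G \ ↑T) G.card := by
  set m : ℕ := 3 ^ u with hmdef
  have hm0 : 0 < m := by positivity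
  choose aC haC1 haC2 haC3 using choose_cheap_col G m hm0 Prod.fst
  choose aR haR1 haR2 haR3 using choose_cheap_col G m hm0 Prod.snd
  set K : ℕ := G.sup (fun p => max p.1 p.2) / m + 2 with hKdef
  have hKbound : ∀ p ∈ G, p.1 / m + 1 < K ∧ p.2 / m + 1 < K := by
    intro p hp
    have h1 : p.1 ≤ G.sup (fun p => max p.1 p.2) :=
      le_trans (le_max_left _ _) (Finset.le_sup (f := fun p : ℕ × ℕ => max p.1 p.2) hp)
    have h2 : p.2 ≤ G.sup (fun p => max p.1 p.2) :=
      le_trans (le_max_right _ _) (Finset.le_sup (f := fun p : ℕ × ℕ => max p.1 p.2) hp)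
    have d1 := Nat.div_le_div_right (c := m) h1
    have d2 := Nat.div_le_div_right (c := m) h2
    omega
  set ACols : Finset ℕ := (range K).image aC with hACdef
  set ARows : Finset ℕ := (range K).image aR with hARdef
  set T₁ : Finset (ℕ × ℕ) := G.filter (fun p => p.1 ∈ ACols ∨ p.2 ∈ ARows) with hT₁def
  have hT₁sub : T₁ ⊆ G := filter_subset _ _
  -- cost of T₁
  have hcost1 : m * (G.filter (fun p => p.1 ∈ ACols)).card ≤ G.card := by
    have hsub : G.filter (fun p => p.1 ∈ ACols) ⊆
        (range K).biUnion (fun c => G.filter (fun p => p.1 = aC c)) := by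
      intro p hp
      obtain ⟨hpG, hpA⟩ := mem_filter.1 hp
      obtain ⟨c, hc, hce⟩ := mem_image.1 hpA
      exact mem_biUnion.2 ⟨c, hc, mem_filter.2 ⟨hpG, hce.symm⟩⟩
    have h1 : (G.filter (fun p => p.1 ∈ ACols)).card ≤
        ∑ c ∈ range K, (G.filter (fun p => p.1 = aC c)).card :=
      le_trans (Finset.card_le_card hsub) (Finset.card_biUnion_le)
    have h2 : ∑ c ∈ range K, m * (G.filter (fun p => p.1 = aC c)).card ≤
        ∑ c ∈ range K, (G.filter (fun p => p.1 / m = c)).card :=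
      Finset.sum_le_sum (fun c _ => haC3 c)
    have h3 : ∑ c ∈ range K, (G.filter (fun p => p.1 / m = c)).card = G.card := by
      symm
      apply Finset.card_eq_sum_card_fiberwise
      intro p hp
      exact mem_range.2 (by have := (hKbound p hp).1; dsimp only; omega)
    calc m * (G.filter (fun p => p.1 ∈ ACols)).card
        ≤ m * ∑ c ∈ range K, (G.filter (fun p => p.1 = aC c)).card :=
          Nat.mul_le_mul_left _ h1
      _ = ∑ c ∈ range K, m * (G.filter (fun p => p.1 = aC c)).card := Finset.mul_sum _ _ _
      _ ≤ ∑ c ∈ range K, (G.filter (fun p => p.1 / m = c)).card := h2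
      _ = G.card := h3
  have hcost2 : m * (G.filter (fun p => p.2 ∈ ARows)).card ≤ G.card := by
    have hsub : G.filter (fun p => p.2 ∈ ARows) ⊆
        (range K).biUnion (fun c => G.filter (fun p => p.2 = aR c)) := by
      intro p hp
      obtain ⟨hpG, hpA⟩ := mem_filter.1 hp
      obtain ⟨c, hc, hce⟩ := mem_image.1 hpA
      exact mem_biUnion.2 ⟨c, hc, mem_filter.2 ⟨hpG, hce.symm⟩⟩
    have h1 : (G.filter (fun p => p.2 ∈ ARows)).card ≤
        ∑ c ∈ range K, (G.filter (fun p => p.2 = aR c)).card :=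
      le_trans (Finset.card_le_card hsub) (Finset.card_biUnion_le)
    have h2 : ∑ c ∈ range K, m * (G.filter (fun p => p.2 = aR c)).card ≤
        ∑ c ∈ range K, (G.filter (fun p => p.2 / m = c)).card :=
      Finset.sum_le_sum (fun c _ => haR3 c)
    have h3 : ∑ c ∈ range K, (G.filter (fun p => p.2 / m = c)).card = G.card := by
      symm
      apply Finset.card_eq_sum_card_fiberwise
      intro p hp
      exact mem_range.2 (by have := (hKbound p hp).2; dsimp only; omega)
    calc m * (G.filter (fun p => p.2 ∈ ARows)).card
        ≤ m * ∑ c ∈ range K, (G.filter (fun p => p.2 = aR c)).card :=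
          Nat.mul_le_mul_left _ h1
      _ = ∑ c ∈ range K, m * (G.filter (fun p => p.2 = aR c)).card := Finset.mul_sum _ _ _
      _ ≤ ∑ c ∈ range K, (G.filter (fun p => p.2 / m = c)).card := h2
      _ = G.card := h3
  have hT₁cost : m * T₁.card ≤ 2 * G.card := by
    have he : T₁ = G.filter (fun p => p.1 ∈ ACols) ∪ G.filter (fun p => p.2 ∈ ARows) := by
      rw [hT₁def, Finset.filter_or]
    have h1 : T₁.card ≤ (G.filter (fun p => p.1 ∈ ACols)).card +
        (G.filter (fun p => p.2 ∈ ARows)).card := he ▸ Finset.card_union_le _ _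
    calc m * T₁.card ≤ m * ((G.filter (fun p => p.1 ∈ ACols)).card +
          (G.filter (fun p => p.2 ∈ ARows)).card) := Nat.mul_le_mul_left _ h1
      _ = m * (G.filter (fun p => p.1 ∈ ACols)).card +
          m * (G.filter (fun p => p.2 ∈ ARows)).card := by ring
      _ ≤ 2 * G.card := by omega
  set s₁ : Set (ℕ × ℕ) := ↑G \ ↑T₁ with hs₁def
  have hs₁P : s₁ ⊆ ↑G := Set.diff_subset
  have hs₁mem : ∀ p ∈ s₁, p ∈ G ∧ p.1 ∉ ACols ∧ p.2 ∉ ARows := by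
    intro p hp
    have hpG : p ∈ G := by exact_mod_cast hp.1
    refine ⟨hpG, ?_, ?_⟩
    · intro hmem
      exact hp.2 (by exact_mod_cast (mem_filter.2 ⟨hpG, Or.inl hmem⟩ : p ∈ T₁))
    · intro hmem
      exact hp.2 (by exact_mod_cast (mem_filter.2 ⟨hpG, Or.inr hmem⟩ : p ∈ T₁))
  have hsAC : ∀ p ∈ s₁, p.1 ∉ ACols ∧ p.2 ∉ ARows := fun p hp => (hs₁mem p hp).2
  by_cases hheavy : ∃ v₀, G.card < 2 * (SierpGraph.compIn s₁ v₀).ncard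
  · obtain ⟨v₀, hv₀⟩ := hheavy
    have hv₀s : v₀ ∈ s₁ := by
      by_contra h
      rw [compIn_eq_empty h] at hv₀
      simp at hv₀
    set Q : Finset (ℕ × ℕ) := G.filter (fun p => p ∈ SierpGraph.compIn s₁ v₀) with hQdef
    have hQcoe : (↑Q : Set (ℕ × ℕ)) = SierpGraph.compIn s₁ v₀ := by
      ext p
      simp only [hQdef, coe_filter, Set.mem_setOf_eq]
      constructor
      · rintro ⟨-, h2⟩; exact h2
      · intro h
        exact ⟨by exact_mod_cast hs₁P (compIn_subset h), h⟩
    have hQP : Q ⊆ G := filter_subset _ _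
    have hQne : Q.Nonempty := ⟨v₀, by
      rw [hQdef, mem_filter]
      exact ⟨by exact_mod_cast hs₁P hv₀s, mem_compIn_self hv₀s⟩⟩
    have hpairx : ∀ w ∈ SierpGraph.compIn s₁ v₀, ∀ w' ∈ SierpGraph.compIn s₁ v₀,
        w.1 ≤ w'.1 → w'.1 < w.1 + 2 * m := by
      intro w hw w' hw' hle
      by_contra hcon
      push_neg at hcon
      have hwG : w ∈ G := (hs₁mem w (compIn_subset hw)).1
      set c : ℕ := w.1 / m + 1 with hcdef
      have e := Nat.div_add_mod w.1 m
      have hmod : w.1 % m < m := Nat.mod_lt _ hm0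
      have ha1 := haC1 c
      have ha2 := haC2 c
      have hcm : c * m = m * (w.1 / m) + m := by rw [hcdef]; ring
      have hcm2 : (c+1) * m = m * (w.1 / m) + 2 * m := by rw [hcdef]; ring
      have hbound1 : w.1 ≤ aC c := by omega
      have hbound2 : aC c < w'.1 := by omega
      have hcK : c ∈ range K := mem_range.2 (by have := (hKbound w hwG).1; omega)
      have haAC : aC c ∈ ACols := by
        rw [hACdef]
        exact mem_image_of_mem _ hcK
      have hw'w : w' ∈ SierpGraph.compIn s₁ w := by
        rw [compIn_eq_of_mem hw]; exact hw'
      have := (comp_confine ACols ARows hsAC w w' hw'w).1 (aC c) haAC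
      rw [min_eq_left hle, max_eq_right hle] at this
      exact this ⟨hbound1, hbound2⟩
    have hpairy : ∀ w ∈ SierpGraph.compIn s₁ v₀, ∀ w' ∈ SierpGraph.compIn s₁ v₀,
        w.2 ≤ w'.2 → w'.2 < w.2 + 2 * m := by
      intro w hw w' hw' hle
      by_contra hcon
      push_neg at hcon
      have hwG : w ∈ G := (hs₁mem w (compIn_subset hw)).1
      set c : ℕ := w.2 / m + 1 with hcdef
      have e := Nat.div_add_mod w.2 m
      have hmod : w.2 % m < m := Nat.mod_lt _ hm0
      have ha1 := haR1 c
      have ha2 := haR2 c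
      have hcm : c * m = m * (w.2 / m) + m := by rw [hcdef]; ring
      have hcm2 : (c+1) * m = m * (w.2 / m) + 2 * m := by rw [hcdef]; ring
      have hbound1 : w.2 ≤ aR c := by omega
      have hbound2 : aR c < w'.2 := by omega
      have hcK : c ∈ range K := mem_range.2 (by have := (hKbound w hwG).2; omega)
      have haAR : aR c ∈ ARows := by
        rw [hARdef]
        exact mem_image_of_mem _ hcK
      have hw'w : w' ∈ SierpGraph.compIn s₁ w := by
        rw [compIn_eq_of_mem hw]; exact hw'
      have := (comp_confine ACols ARows hsAC w w' hw'w).2 (aR c) haAR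
      rw [min_eq_left hle, max_eq_right hle] at this
      exact this ⟨hbound1, hbound2⟩
    have hQimne : (Q.image Prod.fst).Nonempty := hQne.image _
    have hQimne2 : (Q.image Prod.snd).Nonempty := hQne.image _
    set x₀' : ℕ := (Q.image Prod.fst).min' hQimne with hx₀'
    set y₀' : ℕ := (Q.image Prod.snd).min' hQimne2 with hy₀'
    obtain ⟨wx, hwxQ, hwx⟩ := mem_image.1 ((Q.image Prod.fst).min'_mem hQimne)
    obtain ⟨wy, hwyQ, hwy⟩ := mem_image.1 ((Q.image Prod.snd).min'_mem hQimne2)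
    have hwxC : wx ∈ SierpGraph.compIn s₁ v₀ := by rw [← hQcoe]; exact_mod_cast hwxQ
    have hwyC : wy ∈ SierpGraph.compIn s₁ v₀ := by rw [← hQcoe]; exact_mod_cast hwyQ
    have hQbox : ∀ p ∈ Q, x₀' ≤ p.1 ∧ p.1 < x₀' + 3 ^ (u + 1) ∧
        y₀' ≤ p.2 ∧ p.2 < y₀' + 3 ^ (u + 1) := by
      intro p hp
      have hpC : p ∈ SierpGraph.compIn s₁ v₀ := by rw [← hQcoe]; exact_mod_cast hp
      have h1 : x₀' ≤ p.1 := by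
        rw [hx₀']
        exact Finset.min'_le _ _ (mem_image_of_mem _ hp)
      have h2 : y₀' ≤ p.2 := by
        rw [hy₀']
        exact Finset.min'_le _ _ (mem_image_of_mem _ hp)
      have h3 : p.1 < wx.1 + 2 * m :=
        hpairx wx hwxC p hpC (by rw [hwx, ← hx₀']; exact h1)
      have h4 : p.2 < wy.2 + 2 * m :=
        hpairy wy hwyC p hpC (by rw [hwy, ← hy₀']; exact h2)
      have h3' : p.1 < x₀' + 2 * m := by rw [hx₀', ← hwx]; exact h3
      have h4' : p.2 < y₀' + 2 * m := by rw [hy₀', ← hwy]; exact h4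
      have hm3 : 2 * m ≤ 3 ^ (u + 1) := by
        rw [hmdef, pow_succ']
        omega
      exact ⟨h1, by omega, h2, by omega⟩
    obtain ⟨T', hT'Q, hT'card, hT'cuts⟩ :=
      claimA u Q (fun p hp => hG (by exact_mod_cast hQP (by exact_mod_cast hp)))
        G.card x₀' y₀' (Finset.card_le_card hQP) hQbox
    refine ⟨T₁ ∪ T', Finset.union_subset hT₁sub (hT'Q.trans hQP), ?_, ?_⟩
    · calc m * (T₁ ∪ T').card ≤ m * (T₁.card + T'.card) :=
          Nat.mul_le_mul_left _ (Finset.card_union_le _ _)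
        _ = m * T₁.card + m * T'.card := by ring
        _ ≤ 2 * G.card + m * (128 * 2 ^ u) := by
            have := Nat.mul_le_mul_left m hT'card
            omega
    · have hQfun : ∀ v, G.card < 2 * (SierpGraph.compIn (↑G \ ↑T₁) v).ncard →
          SierpGraph.compIn (↑G \ ↑T₁) v = ↑Q := by
        intro v hv
        rw [hQcoe]
        exact heavy_eq hs₁P le_rfl hv₀ hv
      have := compose_cut le_rfl hQfun hT'cuts
      rw [Finset.coe_union]
      exact this
  · push_neg at hheavy
    exact ⟨T₁, hT₁sub, by omega, hheavy⟩

end SepAux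
namespace SepAux
open Relation Finset

lemma isHalfCutSet_of {V : Type*} (X : SimpleGraph V) {G T : Finset V} (hsub : T ⊆ G)
    (h : Cuts X (↑G \ ↑T) G.card) : IsHalfCutSet X G T := by
  refine ⟨hsub, fun v => ?_⟩
  rw [Finset.coe_sdiff]
  exact h v

lemma cutHalf_master (G : Finset (ℕ × ℕ)) (hG : ↑G ⊆ {p : ℕ × ℕ | SierpMem p}) (u : ℕ) :
    3 ^ u * cutHalf SierpGraph G ≤ 2 * G.card + 3 ^ u * (128 * 2 ^ u) := by
  obtain ⟨T, hTsub, hTcost, hTcuts⟩ := master G hG u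
  have h1 : cutHalf SierpGraph G ≤ T.card :=
    Nat.sInf_le ⟨T, isHalfCutSet_of _ hTsub hTcuts, rfl⟩
  calc 3 ^ u * cutHalf SierpGraph G ≤ 3 ^ u * T.card := Nat.mul_le_mul_left _ h1
    _ ≤ _ := hTcost

lemma sepHalf_le (n u : ℕ) :
    sepHalf SierpGraph {p : ℕ × ℕ | SierpMem p} n ≤
      (2 * n + 3 ^ u * (128 * 2 ^ u)) / 3 ^ u := by
  apply csSup_le
  · refine ⟨0, ∅, by simp, by simp, ?_⟩
    have := cutHalf_le_card SierpGraph (∅ : Finset (ℕ × ℕ))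
    simp at this
    omega
  · rintro c ⟨G, hGW, hGn, rfl⟩
    rw [Nat.le_div_iff_mul_le (by positivity)]
    rw [Nat.mul_comm]
    calc 3 ^ u * cutHalf SierpGraph G ≤ 2 * G.card + 3 ^ u * (128 * 2 ^ u) :=
        cutHalf_master G hGW u
      _ ≤ 2 * n + 3 ^ u * (128 * 2 ^ u) := by omega

lemma sepHalf_bddAbove (n : ℕ) :
    BddAbove {c | ∃ G : Finset (ℕ × ℕ), ↑G ⊆ {p : ℕ × ℕ | SierpMem p} ∧ G.card ≤ n ∧
      c = cutHalf SierpGraph G} := by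
  refine ⟨n, ?_⟩
  rintro c ⟨G, -, hGn, rfl⟩
  exact le_trans (cutHalf_le_card _ _) hGn

lemma sepHalf_ge {n k : ℕ} (hk : 1 ≤ k) (hn : (Gk k).card ≤ n) :
    2 ^ k ≤ 4 * sepHalf SierpGraph {p : ℕ × ℕ | SierpMem p} n := by
  have hmem : cutHalf SierpGraph (Gk k) ∈ {c | ∃ G : Finset (ℕ × ℕ),
      ↑G ⊆ {p : ℕ × ℕ | SierpMem p} ∧ G.card ≤ n ∧ c = cutHalf SierpGraph G} :=
    ⟨Gk k, Gk_subset_sierp k, hn, rfl⟩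
  have hle : cutHalf SierpGraph (Gk k) ≤ sepHalf SierpGraph {p : ℕ × ℕ | SierpMem p} n :=
    le_csSup (sepHalf_bddAbove n) hmem
  calc 2 ^ k ≤ 4 * cutHalf SierpGraph (Gk k) := lower_cutHalf hk
    _ ≤ 4 * _ := Nat.mul_le_mul_left _ hle

lemma card_Gk_le (k : ℕ) : (Gk k).card ≤ 2 * 6 ^ k := by
  have h := card_Gk k
  have h6 : (6:ℕ) ^ k = 2 ^ k * 3 ^ k := by
    rw [← Nat.mul_pow]
  omega

noncomputable def alp : ℝ := Real.log 2 / Real.log 6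

lemma log6_pos : (0:ℝ) < Real.log 6 := Real.log_pos (by norm_num)

lemma alp_nonneg : 0 ≤ alp :=
  div_nonneg (Real.log_nonneg (by norm_num)) (le_of_lt log6_pos)

lemma alp_le_one : alp ≤ 1 := by
  rw [alp, div_le_one log6_pos]
  exact Real.log_le_log (by norm_num) (by norm_num)

lemma rpow_six (k : ℕ) : (((6:ℝ) ^ k)) ^ alp = 2 ^ k := by
  rw [← Real.rpow_natCast 6 k, ← Real.rpow_natCast 2 k,
    ← Real.rpow_mul (by norm_num : (0:ℝ) ≤ 6)]
  rw [Real.rpow_def_of_pos (by norm_num : (0:ℝ) < 6),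
    Real.rpow_def_of_pos (by norm_num : (0:ℝ) < 2)]
  congr 1
  rw [alp]
  field_simp
end SepAux

open SepAux

/-- The separation profile of the infinite Sierpinski graph satisfies
`sep¹ᐟ²_S(n) ≍ n^(log 2 / log 6)`. -/
theorem sierpinski_sep :
    ∃ c C : ℝ, 0 < c ∧ 0 < C ∧ ∃ N : ℕ, ∀ n : ℕ, N ≤ n →
      c * (n : ℝ) ^ (Real.log 2 / Real.log 6) ≤
          (sepHalf SierpGraph {p : ℕ × ℕ | SierpMem p} n : ℝ) ∧
        (sepHalf SierpGraph {p : ℕ × ℕ | SierpMem p} n : ℝ) ≤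
          C * (n : ℝ) ^ (Real.log 2 / Real.log 6) := by
  refine ⟨1/52, 140, by norm_num, by norm_num, 100, fun n hn => ?_⟩
  have hα : Real.log 2 / Real.log 6 = alp := rfl
  set sp : ℕ := sepHalf SierpGraph {p : ℕ × ℕ | SierpMem p} n with hsp
  rw [hα]
  have hnalp_nonneg : (0:ℝ) ≤ (n:ℝ) ^ alp := Real.rpow_nonneg (by positivity) _
  constructor
  · -- lower bound
    set k : ℕ := Nat.log 6 (n / 2) with hk
    have hn2 : n / 2 ≠ 0 := by omega
    have h6k : 6 ^ k ≤ n / 2 := Nat.pow_log_le_self 6 hn2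
    have hk1 : 1 ≤ k := by
      have h61 : (6:ℕ) ^ 1 ≤ n / 2 := by omega
      rw [hk]
      exact (Nat.le_log_iff_pow_le (by norm_num) hn2).2 h61
    have hcard : (Gk k).card ≤ n := le_trans (card_Gk_le k) (by omega)
    have hlow : 2 ^ k ≤ 4 * sp := sepHalf_ge hk1 hcard
    have hup : n < 13 * 6 ^ k := by
      have h2 := Nat.lt_pow_succ_log_self (by norm_num : 1 < 6) (n / 2)
      rw [← hk] at h2
      have h6k1 : (6:ℕ) ^ (k+1) = 6 * 6 ^ k := by ring
      have h6kpos : 1 ≤ (6:ℕ) ^ k := Nat.one_le_pow _ _ (by norm_num)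
      omega
    have hnR : (n:ℝ) ^ alp ≤ 13 * 2 ^ k := by
      have hc1 : (n:ℝ) ≤ (13:ℝ) * 6 ^ k := by exact_mod_cast le_of_lt hup
      calc (n:ℝ) ^ alp ≤ ((13:ℝ) * 6 ^ k) ^ alp :=
          Real.rpow_le_rpow (by positivity) hc1 alp_nonneg
        _ = (13:ℝ) ^ alp * ((6:ℝ) ^ k) ^ alp := Real.mul_rpow (by norm_num) (by positivity)
        _ ≤ 13 * 2 ^ k := by
            rw [rpow_six]
            have h13 : (13:ℝ) ^ alp ≤ 13 := by
              calc (13:ℝ) ^ alp ≤ (13:ℝ) ^ (1:ℝ) :=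
                  Real.rpow_le_rpow_of_exponent_le (by norm_num) alp_le_one
                _ = 13 := Real.rpow_one 13
            have h2k : (0:ℝ) ≤ 2 ^ k := by positivity
            nlinarith
    have hspR : (2:ℝ) ^ k ≤ 4 * sp := by exact_mod_cast hlow
    calc (1/52 : ℝ) * (n:ℝ) ^ alp ≤ (1/52) * (13 * 2 ^ k) := by nlinarith
      _ = (2:ℝ) ^ k / 4 := by ring
      _ ≤ sp := by linarith
  · -- upper bound
    set u : ℕ := Nat.log 6 n with hu
    have hn0 : n ≠ 0 := by omega
    have h6u : 6 ^ u ≤ n := Nat.pow_log_le_self 6 hn0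
    have hn6 : n < 6 ^ (u+1) := Nat.lt_pow_succ_log_self (by norm_num) n
    have hsep := sepHalf_le n u
    rw [← hsp] at hsep
    have hsep' : sp * 3 ^ u ≤ 2 * n + 3 ^ u * (128 * 2 ^ u) :=
      (Nat.le_div_iff_mul_le (by positivity)).1 hsep
    have hsepR : (sp:ℝ) * 3 ^ u ≤ 2 * n + 3 ^ u * (128 * 2 ^ u) := by exact_mod_cast hsep'
    have h2n : (2 * n : ℕ) ≤ 12 * 6 ^ u := by
      have h6u1 : (6:ℕ) ^ (u+1) = 6 * 6 ^ u := by ring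
      omega
    have h2nR : (2 * (n:ℝ)) ≤ 12 * 6 ^ u := by exact_mod_cast h2n
    have h6split : ((6:ℝ)) ^ u = 2 ^ u * 3 ^ u := by
      rw [← mul_pow]; norm_num
    have h3pos : (0:ℝ) < 3 ^ u := by positivity
    have hspu : (sp:ℝ) ≤ 140 * 2 ^ u := by
      have : (sp:ℝ) * 3 ^ u ≤ (140 * 2 ^ u) * 3 ^ u := by
        calc (sp:ℝ) * 3 ^ u ≤ 2 * n + 3 ^ u * (128 * 2 ^ u) := hsepR
          _ ≤ 12 * 6 ^ u + 3 ^ u * (128 * 2 ^ u) := by linarith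
          _ = (140 * 2 ^ u) * 3 ^ u := by rw [h6split]; ring
      exact le_of_mul_le_mul_right this h3pos
    have h2u : (2:ℝ) ^ u ≤ (n:ℝ) ^ alp := by
      rw [← rpow_six u]
      exact Real.rpow_le_rpow (by positivity) (by exact_mod_cast h6u) alp_nonneg
    calc (sp:ℝ) ≤ 140 * 2 ^ u := hspu
      _ ≤ 140 * (n:ℝ) ^ alp := by linarith
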